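/- For every rooted binary tree T with n ≥ 1 leaves, N_b(T) ≥ n - 1, with equality if and only if T is the caterpillar tree on n leaves. -/
import Mathlib


/-- Rooted binary trees: a leaf, or an internal vertex with two child subtrees. -/
inductive BTree where
  | leaf : BTree
  | node : BTree → BTree → BTree
deriving DecidableEq

namespace BTree

/-- Number of leaves of a rooted binary tree. -/
def numLeaves : BTree → ℕ
  | leaf => 1
  | node l r => numLeaves l + numLeaves r

/-- Sackin index: sum over internal vertices `v` of `n_{v_a} + n_{v_b}`. -/
def sackin : BTree → ℕ
  | leaf => 0
  | node l r => sackin l + sackin r + (numLeaves l + numLeaves r)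

/-- Colless index: sum over internal vertices `v` of `|n_{v_a} - n_{v_b}|`. -/
def colless : BTree → ℕ
  | leaf => 0
  | node l r =>
      colless l + colless r +
        (max (numLeaves l) (numLeaves r) - min (numLeaves l) (numLeaves r))

/-- `N_a`: sum over internal vertices of the larger child-subtree leaf count. -/
def Na : BTree → ℕ
  | leaf => 0
  | node l r => Na l + Na r + max (numLeaves l) (numLeaves r)

/-- `N_b`: sum over internal vertices of the smaller child-subtree leaf count. -/
def Nb : BTree → ℕ
  | leaf => 0
  | node l r => Nb l + Nb r + min (numLeaves l) (numLeaves r)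

/-- `Δ_CS = C - S`, as an integer. -/
def deltaCS (T : BTree) : ℤ := (colless T : ℤ) - (sackin T : ℤ)

/-- Caterpillar trees: every internal vertex has at least one leaf child. -/
def isCaterpillar : BTree → Prop
  | leaf => True
  | node l r => (l = leaf ∧ isCaterpillar r) ∨ (r = leaf ∧ isCaterpillar l)

/-- The fully balanced tree of height `h`. -/
def fbTree : ℕ → BTree
  | 0 => leaf
  | h + 1 => node (fbTree h) (fbTree h)

end BTree


namespace BTree

lemma one_le_numLeaves (T : BTree) : 1 ≤ numLeaves T := by
  induction T with
  | leaf => simp [numLeaves]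
  | node l r ihl ihr => simp [numLeaves]; omega

lemma numLeaves_eq_one_iff (T : BTree) : numLeaves T = 1 ↔ T = leaf := by
  cases T with
  | leaf => simp [numLeaves]
  | node l r =>
    simp [numLeaves]
    have := one_le_numLeaves l
    have := one_le_numLeaves r
    omega

end BTree

open BTree in
/-- `N_b(T) ≥ n - 1`, with equality iff `T` is the caterpillar tree. -/
theorem Nb_ge_n_sub_one (T : BTree) :
    numLeaves T - 1 ≤ Nb T ∧ (Nb T = numLeaves T - 1 ↔ isCaterpillar T) := by
  induction T with
  | leaf => simp [numLeaves, Nb, isCaterpillar]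
  | node l r ihl ihr =>
    obtain ⟨hl, hle⟩ := ihl
    obtain ⟨hr, hre⟩ := ihr
    have h1 := one_le_numLeaves l
    have h2 := one_le_numLeaves r
    simp only [numLeaves, Nb, isCaterpillar]
    constructor
    · have : 1 ≤ min (numLeaves l) (numLeaves r) := le_min h1 h2
      omega
    · constructor
      · intro h
        rcases le_total (numLeaves l) (numLeaves r) with hc | hc
        · have hm : min (numLeaves l) (numLeaves r) = numLeaves l := min_eq_left hc
          rw [hm] at h
          have hl1 : numLeaves l = 1 := by omega
          left
          refine ⟨(numLeaves_eq_one_iff l).mp hl1, ?_⟩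
          apply hre.mp
          have : Nb l = 0 := by
            have : Nb l ≤ 0 := by omega
            omega
          omega
        · have hm : min (numLeaves l) (numLeaves r) = numLeaves r := min_eq_right hc
          rw [hm] at h
          have hr1 : numLeaves r = 1 := by omega
          right
          refine ⟨(numLeaves_eq_one_iff r).mp hr1, ?_⟩
          apply hle.mp
          omega
      · intro h
        rcases h with ⟨he, hc⟩ | ⟨he, hc⟩
        · subst he
          have := hre.mpr hc
          simp [Nb, numLeaves] at *
          omega
        · subst he
          have := hle.mpr hc
          simp [Nb, numLeaves] at *
          omega
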